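/- Suppose the gradient oracle is unbiased (E_ξ[∇f(x,ξ)] = ∇f(x) for all x), the interpolation condition holds, and for almost every ξ the realization f(·,ξ) is (𝓗0,𝓗1)-smooth with respect to its own infimum f_ξ* := inf_x f(x,ξ): for all x, y with ‖y − x‖ ≤ 1/√𝓗1, ‖∇f(y,ξ) − ∇f(x,ξ)‖ ≤ (𝓗0 + 𝓗1·(f(x,ξ) − f_ξ*))‖y − x‖. Then the expected objective f(x) = E_ξ[f(x,ξ)] is (H0,H1)-smooth with the same constants H0 = 𝓗0 and H1 = 𝓗1: for all x, y with ‖y − x‖ ≤ 1/√H1, ‖∇f(y) − ∇f(x)‖ ≤ (H0 + H1·(f(x) − f*))‖y − x‖, where f* = inf f. -/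

import Mathlib

open MeasureTheory
open scoped RealInnerProductSpace

noncomputable section

/-- If the gradient oracle is unbiased, the interpolation
condition holds, and a.e. realization `F(·,ξ)` is `(𝓗0,𝓗1)`-smooth with respect
to its own infimum, then the expected objective `f = E_ξ[F(·,ξ)]` is
`(H0,H1)`-smooth with the same constants `H0 = 𝓗0`, `H1 = 𝓗1`, with respect to
`f* = inf f`. -/
theorem expected_H0H1_smooth
    {d : ℕ} {Ξ : Type*} [MeasurableSpace Ξ]
    (D : Measure Ξ) [IsProbabilityMeasure D]
    (F : Ξ → EuclideanSpace ℝ (Fin d) → ℝ)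
    (f : EuclideanSpace ℝ (Fin d) → ℝ)
    (f' : EuclideanSpace ℝ (Fin d) → EuclideanSpace ℝ (Fin d))
    (G : EuclideanSpace ℝ (Fin d) → Ξ → EuclideanSpace ℝ (Fin d))
    (H0 H1 : ℝ)
    (xstar : EuclideanSpace ℝ (Fin d))
    (hH0 : 0 ≤ H0) (hH1 : 0 ≤ H1)
    -- `f` is the expectation of the realizations `F`
    (hf : ∀ y, f y = ∫ s, F s y ∂D)
    (hFint : ∀ y, Integrable (fun s => F s y) D)
    (hgrad : ∀ y, HasGradientAt f (f' y) y)
    (hGgrad : ∀ᵐ s ∂D, ∀ y, HasGradientAt (F s) (G y s) y)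
    (hGint : ∀ y, Integrable (fun s => G y s) D)
    -- unbiased gradient oracle
    (hunbiased : ∀ y, ∫ s, G y s ∂D = f' y)
    -- `xstar` minimizes `f`, and interpolation holds
    (hmin : ∀ y, f xstar ≤ f y)
    (hinterp : ∀ᵐ s ∂D, ∀ y, F s xstar ≤ F s y)
    -- a.e. realization is `(𝓗0,𝓗1)`-smooth w.r.t. its own infimum
    (hsmooth : ∀ᵐ s ∂D, ∀ y z : EuclideanSpace ℝ (Fin d),
      Real.sqrt H1 * ‖z - y‖ ≤ 1 →
      ‖G z s - G y s‖ ≤ (H0 + H1 * (F s y - ⨅ w, F s w)) * ‖z - y‖) :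
    -- conclusion: `f` is `(H0,H1)`-smooth w.r.t. `f* = inf f`
    ∀ y z : EuclideanSpace ℝ (Fin d), Real.sqrt H1 * ‖z - y‖ ≤ 1 →
      ‖f' z - f' y‖ ≤ (H0 + H1 * (f y - ⨅ w, f w)) * ‖z - y‖ := by
  intro y z hyz
  have hfx : (⨅ w, f w) = f xstar :=
    le_antisymm (ciInf_le ⟨f xstar, by rintro a ⟨w, rfl⟩; exact hmin w⟩ xstar) (le_ciInf hmin)
  have key : f' z - f' y = ∫ s, (G z s - G y s) ∂D := by
    rw [← hunbiased z, ← hunbiased y, integral_sub (hGint z) (hGint y)]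
  have hbound : ∀ᵐ s ∂D, ‖G z s - G y s‖ ≤
      H0 * ‖z - y‖ + H1 * ‖z - y‖ * (F s y - F s xstar) := by
    filter_upwards [hsmooth, hinterp] with s hs hi
    have h1 : (⨅ w, F s w) = F s xstar :=
      le_antisymm (ciInf_le ⟨F s xstar, by rintro a ⟨w, rfl⟩; exact hi w⟩ xstar) (le_ciInf hi)
    have h2 := hs y z hyz
    rw [h1] at h2
    calc ‖G z s - G y s‖ ≤ (H0 + H1 * (F s y - F s xstar)) * ‖z - y‖ := h2
    _ = H0 * ‖z - y‖ + H1 * ‖z - y‖ * (F s y - F s xstar) := by ring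
  have hint2 : Integrable (fun s => H1 * ‖z - y‖ * (F s y - F s xstar)) D :=
    ((hFint y).sub (hFint xstar)).const_mul _
  have hint : Integrable (fun s => H0 * ‖z - y‖ + H1 * ‖z - y‖ * (F s y - F s xstar)) D :=
    (integrable_const _).add hint2
  rw [key, hfx]
  refine (norm_integral_le_of_norm_le hint hbound).trans ?_
  have e1 : ∫ x, H1 * ‖z - y‖ * (F x y - F x xstar) ∂D = H1 * ‖z - y‖ * (f y - f xstar) := by
    rw [integral_const_mul, integral_sub (hFint y) (hFint xstar), ← hf y, ← hf xstar]
  rw [integral_add (integrable_const _) hint2, e1, integral_const]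
  simp only [measure_univ, probReal_univ, ENNReal.toReal_one, smul_eq_mul, one_mul]
  apply le_of_eq; ring


end
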